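/- Let 0 < α < 1 and λ ≥ 0. For every t > 0, the function H(t) = (1/Γ(1-α)) ∫_0^t (t-s)^{-α} (E_{α,1}(-λ s^α) - 1) ds is differentiable at t, and its derivative equals -λ E_{α,1}(-λ t^α). (In other words, w(t) = E_{α,1}(-λ t^α) satisfies the time-fractional equation ∂_t^α(w - w(0)) + λ w = 0, where ∂_t^α f = d/dt (g_{1-α} ∗ f) is the Riemann–Liouville fractional derivative; this is the Fourier-space form of the fully nonlocal diffusion equation solved by the fundamental solution Z.) -/

import Mathlib

open MeasureTheory Real Set

/-- The two-parameter Mittag-Leffler function `E_{a,b}(z) = ∑ₖ zᵏ / Γ(a k + b)`. -/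
noncomputable def mittagLeffler (a b z : ℝ) : ℝ :=
  ∑' k : ℕ, z ^ k / Real.Gamma (a * k + b)

set_option maxHeartbeats 1000000 in
lemma summable_ml {a b : ℝ} (ha : 0 < a) (hb : 0 < b) {x : ℝ} (hx : 0 ≤ x) :
    Summable (fun k : ℕ => x ^ k / Real.Gamma (a * k + b)) := by
  have hΓ : ∀ k : ℕ, 0 < Real.Gamma (a * k + b) := fun k =>
    Real.Gamma_pos_of_pos (by positivity)
  rcases eq_or_lt_of_le hx with hx0 | hx
  · refine summable_of_ne_finset_zero (s := {0}) fun k hk => ?_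
    simp only [Finset.mem_singleton] at hk
    rw [← hx0, zero_pow hk, zero_div]
  set m : ℕ := ⌈1/a⌉₊ with hm
  have hm1 : 1 ≤ m := Nat.one_le_ceil_iff.mpr (by positivity)
  have ham : 1 ≤ a * m := by
    have h := Nat.le_ceil (1/a)
    calc (1:ℝ) = a * (1/a) := by field_simp
    _ ≤ a * m := by gcongr
  set K : ℕ := ⌈(2 + 2 * x ^ m)/a⌉₊ with hK
  have hK2 : 2 + 2 * x ^ m ≤ a * K := by
    have h1 : (2 + 2 * x ^ m)/a ≤ (K:ℝ) := Nat.le_ceil _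
    calc 2 + 2 * x ^ m = a * ((2 + 2 * x ^ m)/a) := by field_simp
    _ ≤ a * K := by gcongr
  set f : ℕ → ℝ := fun k => x ^ k / Real.Gamma (a * k + b) with hf
  have hfpos : ∀ k, 0 ≤ f k := fun k => by
    have := hΓ k; have := pow_nonneg hx.le k; positivity
  have step : ∀ k : ℕ, K ≤ k → f (k + m) ≤ 1/2 * f k := by
    intro k hk
    have hkk : (K:ℝ) ≤ k := by exact_mod_cast hk
    have hak : a * K ≤ a * k := by gcongr
    have hy2 : 2 ≤ a * k + b := by nlinarith [pow_nonneg hx.le m]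
    have hyx : 2 * x ^ m ≤ a * k + b := by nlinarith
    have h1 : Real.Gamma (a * k + b + 1) ≤ Real.Gamma (a * (k + m) + b) := by
      apply Real.Gamma_strictMonoOn_Ici.monotoneOn
      · exact mem_Ici.mpr (by linarith)
      · exact mem_Ici.mpr (by push_cast; nlinarith)
      · push_cast; nlinarith
    have h2 : Real.Gamma (a * k + b + 1) = (a * k + b) * Real.Gamma (a * k + b) :=
      Real.Gamma_add_one (by linarith)
    have hxm : 0 < x ^ m := pow_pos hx m
    have h3 : 2 * x ^ m * Real.Gamma (a * k + b) ≤ Real.Gamma (a * (k + m) + b) := by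
      rw [h2] at h1
      nlinarith [hΓ k]
    calc f (k + m) = x ^ (k + m) / Real.Gamma (a * (k + m) + b) := by
          simp only [hf]; push_cast; ring_nf
    _ ≤ x ^ (k + m) / (2 * x ^ m * Real.Gamma (a * k + b)) := by
          gcongr
    _ = 1/2 * f k := by
          simp only [hf, pow_add]
          field_simp
  have decay : ∀ (j i : ℕ), f (K + (j * m + i)) ≤ (1/2) ^ j * f (K + i) := by
    intro j
    induction j with
    | zero => intro i; simp
    | succ j ih =>
      intro i
      have hidx : K + ((j+1) * m + i) = (K + (j * m + i)) + m := by ring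
      rw [hidx]
      calc f ((K + (j * m + i)) + m) ≤ 1/2 * f (K + (j * m + i)) :=
            step _ (Nat.le_add_right _ _)
      _ ≤ 1/2 * ((1/2) ^ j * f (K + i)) := by
            have := ih i; nlinarith [hfpos (K + (j*m+i))]
      _ = (1/2) ^ (j+1) * f (K + i) := by ring
  have : NeZero m := ⟨by omega⟩
  have hgeo : Summable (fun j : ℕ => (1/2:ℝ) ^ j) :=
    summable_geometric_of_lt_one (by norm_num) (by norm_num)
  have hfin : Summable (fun i : Fin m => f (K + (i : ℕ))) := Summable.of_finite
  have hsum2 : Summable (fun p : ℕ × Fin m => (1/2:ℝ) ^ p.1 * f (K + (p.2 : ℕ))) :=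
    hgeo.mul_of_nonneg hfin (fun j => by positivity) (fun i => hfpos _)
  have hsumK : Summable (fun k => f (K + k)) := by
    rw [← ((Nat.divModEquiv m).symm).summable_iff]
    refine Summable.of_nonneg_of_le (fun p => hfpos _) (fun p => ?_) hsum2
    simpa using decay p.1 p.2
  exact (summable_nat_add_iff K).mp (hsumK.congr fun k => by rw [Nat.add_comm])

lemma summable_ml' {a b : ℝ} (ha : 0 < a) (hb : 0 < b) (z : ℝ) :
    Summable (fun k : ℕ => z ^ k / Real.Gamma (a * k + b)) := by
  have hΓ : ∀ k : ℕ, 0 < Real.Gamma (a * k + b) := fun k =>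
    Real.Gamma_pos_of_pos (by positivity)
  refine Summable.of_abs ?_
  exact (summable_ml ha hb (abs_nonneg z)).congr fun k => by
    rw [abs_div, abs_pow, abs_of_pos (hΓ k)]

lemma continuous_ml {a b : ℝ} (ha : 0 < a) (hb : 0 < b) :
    Continuous (mittagLeffler a b) := by
  have hΓ : ∀ k : ℕ, 0 < Real.Gamma (a * k + b) := fun k =>
    Real.Gamma_pos_of_pos (by positivity)
  rw [continuous_iff_continuousAt]
  intro z
  have hR : |z| < |z| + 1 := by linarith
  have hcont : ContinuousOn (mittagLeffler a b) (Metric.ball 0 (|z| + 1)) := by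
    show ContinuousOn (fun y : ℝ => ∑' k : ℕ, y ^ k / Real.Gamma (a * k + b)) _
    refine continuousOn_tsum (fun k => ?_)
      (summable_ml ha hb (by positivity : (0:ℝ) ≤ |z| + 1)) (fun k y hy => ?_)
    · exact ((continuous_pow k).div_const _).continuousOn
    · rw [Real.norm_eq_abs, abs_div, abs_pow, abs_of_pos (hΓ k)]
      have hy' : |y| ≤ |z| + 1 :=
        le_of_lt (by simpa [Real.dist_eq] using Metric.mem_ball.mp hy)
      gcongr
  exact hcont.continuousAt (Metric.isOpen_ball.mem_nhds (by simpa [Real.dist_eq] using hR))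

lemma real_beta {u v τ : ℝ} (hu : 0 < u) (hv : 0 < v) (hτ : 0 < τ) :
    ∫ s in (0:ℝ)..τ, s ^ (u - 1) * (τ - s) ^ (v - 1) =
      τ ^ (u + v - 1) * (Real.Gamma u * Real.Gamma v / Real.Gamma (u + v)) := by
  have hu' : 0 < (u:ℂ).re := by simpa using hu
  have hv' : 0 < (v:ℂ).re := by simpa using hv
  have h1 := Complex.betaIntegral_scaled (u:ℂ) (v:ℂ) hτ
  have h2 := Complex.Gamma_mul_Gamma_eq_betaIntegral hu' hv'
  have hΓuv : Real.Gamma (u + v) ≠ 0 := (Real.Gamma_pos_of_pos (by positivity)).ne'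
  have hcoe : ((u:ℂ) + (v:ℂ)) = ((u + v : ℝ) : ℂ) := by push_cast; ring
  have hΓuvC : Complex.Gamma ((u:ℂ) + (v:ℂ)) ≠ 0 := by
    rw [hcoe, Complex.Gamma_ofReal]
    exact_mod_cast hΓuv
  have hβ : Complex.betaIntegral u v =
      Complex.Gamma u * Complex.Gamma v / Complex.Gamma ((u:ℂ) + (v:ℂ)) := by
    rw [eq_div_iff hΓuvC]
    exact (mul_comm _ _).trans h2.symm
  have h3 : ((∫ s in (0:ℝ)..τ, s ^ (u - 1) * (τ - s) ^ (v - 1) : ℝ) : ℂ)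
      = ∫ x in (0:ℝ)..τ, (x:ℂ) ^ ((u:ℂ) - 1) * ((τ:ℂ) - (x:ℂ)) ^ ((v:ℂ) - 1) := by
    rw [← intervalIntegral.integral_ofReal]
    refine intervalIntegral.integral_congr fun x hx => ?_
    rw [uIcc_of_le hτ.le] at hx
    rw [Complex.ofReal_mul, Complex.ofReal_cpow hx.1,
      Complex.ofReal_cpow (by linarith [hx.2] : (0:ℝ) ≤ τ - x)]
    push_cast
    ring
  apply Complex.ofReal_injective
  rw [h3, h1, hβ, hcoe, Complex.Gamma_ofReal]
  rw [Complex.ofReal_mul, Complex.ofReal_div, Complex.ofReal_mul,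
    Complex.ofReal_cpow hτ.le, ← Complex.Gamma_ofReal u, ← Complex.Gamma_ofReal v]
  congr 2
  · push_cast; ring
  · exact Complex.Gamma_ofReal _


lemma ml_tail {a : ℝ} (ha : 0 < a) (z : ℝ) :
    mittagLeffler a 1 z - 1 = ∑' k : ℕ, z ^ (k+1) / Real.Gamma (a * (k+1) + 1) := by
  have h0 := Summable.tsum_eq_zero_add (summable_ml' ha one_pos z)
  rw [mittagLeffler, h0]
  push_cast
  norm_num [Real.Gamma_one]

lemma integrableOn_sub_rpow {c τ : ℝ} (hc : c < 1) (hτ : 0 < τ) :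
    IntegrableOn (fun s => (τ - s) ^ (-c)) (Ioc 0 τ) volume := by
  have h := (intervalIntegral.intervalIntegrable_rpow' (r := -c) (by linarith) (a := 0) (b := τ)).comp_sub_left τ
  rw [sub_zero, sub_self] at h
  exact (intervalIntegrable_iff_integrableOn_Ioc_of_le hτ.le).mp h.symm

lemma lhs_eq (α lam : ℝ) (hα : 0 < α) (hα1 : α < 1) (hlam : 0 ≤ lam) {τ : ℝ} (hτ : 0 < τ) :
    ∫ s in (0:ℝ)..τ, (τ - s) ^ (-α) * (mittagLeffler α 1 (-(lam * s ^ α)) - 1)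
      = ∑' k : ℕ, (-lam) ^ (k+1) * Real.Gamma (1-α) * τ ^ (α*k+1) / Real.Gamma (α*k+2) := by
  have hΓ : ∀ c : ℝ, 0 < c → 0 < Real.Gamma c := fun c hc => Real.Gamma_pos_of_pos hc
  set F : ℕ → ℝ → ℝ := fun k s =>
    (τ - s) ^ (-α) * ((-(lam * s ^ α)) ^ (k+1) / Real.Gamma (α * (k+1) + 1)) with hF
  have hptw : ∀ s : ℝ, (τ - s) ^ (-α) * (mittagLeffler α 1 (-(lam * s ^ α)) - 1)
      = ∑' k : ℕ, F k s := by
    intro s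
    rw [ml_tail hα, ← tsum_mul_left]
  have hx : (0:ℝ) ≤ lam * τ ^ α := by positivity
  have hrestr : volume.restrict (Ioc (0:ℝ) τ) = volume.restrict (Ioo (0:ℝ) τ) :=
    (Measure.restrict_congr_set Ioo_ae_eq_Ioc).symm
  have hconts : ∀ k : ℕ, ContinuousOn (F k) (Ioo 0 τ) := by
    intro k
    refine ContinuousOn.mul ?_ (ContinuousOn.div_const ?_ _)
    · refine ContinuousOn.rpow_const (continuous_const.sub continuous_id).continuousOn ?_
      intro s hs
      exact Or.inl (sub_ne_zero.mpr (ne_of_gt hs.2))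
    · exact ((continuous_const.mul (Real.continuous_rpow_const hα.le)).neg.pow (k+1)).continuousOn
  have hmeas : ∀ k : ℕ, AEStronglyMeasurable (F k) (volume.restrict (Ioc 0 τ)) := by
    intro k
    rw [hrestr]
    exact (hconts k).aestronglyMeasurable measurableSet_Ioo
  have hbound : ∀ k : ℕ, ∀ s ∈ Ioc (0:ℝ) τ, ‖F k s‖ ≤
      ((lam * τ ^ α) ^ (k+1) / Real.Gamma (α * (k+1) + 1)) * (τ - s) ^ (-α) := by
    intro k s hs
    have h1 : (0:ℝ) ≤ τ - s := by linarith [hs.2]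
    have h2 : s ^ α ≤ τ ^ α := Real.rpow_le_rpow hs.1.le hs.2 hα.le
    have h3 : (0:ℝ) ≤ s ^ α := Real.rpow_nonneg hs.1.le α
    have hΓk := hΓ (α * (k+1) + 1) (by positivity)
    rw [hF]
    simp only [norm_mul, norm_div, Real.norm_eq_abs]
    rw [abs_of_nonneg (Real.rpow_nonneg h1 _), abs_of_pos hΓk, abs_pow, abs_neg,
      abs_of_nonneg (by positivity : (0:ℝ) ≤ lam * s ^ α)]
    rw [mul_comm]
    gcongr
  have hCint : IntegrableOn (fun s => (τ - s) ^ (-α)) (Ioc 0 τ) volume :=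
    integrableOn_sub_rpow hα1 hτ
  have hgk : ∀ k : ℕ, IntegrableOn
      (fun s => ((lam * τ ^ α) ^ (k+1) / Real.Gamma (α * (k+1) + 1)) * (τ - s) ^ (-α))
      (Ioc 0 τ) volume := fun k => hCint.const_mul _
  have hFint : ∀ k : ℕ, IntegrableOn (F k) (Ioc 0 τ) volume := by
    intro k
    refine Integrable.mono (hgk k) (hmeas k) ?_
    rw [ae_restrict_iff' measurableSet_Ioc]
    filter_upwards with s hs
    refine (hbound k s hs).trans (le_abs_self _)
  have hsumint : Summable (fun k : ℕ => ∫ s in Ioc (0:ℝ) τ, ‖F k s‖) := by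
    set Cτ : ℝ := ∫ s in Ioc (0:ℝ) τ, (τ - s) ^ (-α) with hCτ
    have hb : Summable (fun k : ℕ =>
        ((lam * τ ^ α) ^ (k+1) / Real.Gamma (α * (k+1) + 1)) * Cτ) := by
      have h1 : Summable (fun k : ℕ => (lam * τ ^ α) ^ (k+1) / Real.Gamma (α * (k+1) + 1)) := by
        have h2 := (summable_nat_add_iff 1).mpr (summable_ml hα one_pos hx)
        exact h2.congr fun k => by push_cast; ring_nf
      exact h1.mul_right _
    refine Summable.of_nonneg_of_le
      (fun k => integral_nonneg fun s => norm_nonneg _) (fun k => ?_) hb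
    calc (∫ s in Ioc (0:ℝ) τ, ‖F k s‖)
        ≤ ∫ s in Ioc (0:ℝ) τ,
            ((lam * τ ^ α) ^ (k+1) / Real.Gamma (α * (k+1) + 1)) * (τ - s) ^ (-α) := by
          refine setIntegral_mono_on ((hFint k).norm) (hgk k) measurableSet_Ioc ?_
          intro s hs; exact hbound k s hs
    _ = _ := by rw [MeasureTheory.integral_const_mul]
  have hswap := MeasureTheory.integral_tsum_of_summable_integral_norm
    (F := F) (μ := volume.restrict (Ioc (0:ℝ) τ)) hFint hsumint
  have hval : ∀ k : ℕ, (∫ s in Ioc (0:ℝ) τ, F k s)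
      = (-lam) ^ (k+1) * Real.Gamma (1-α) * τ ^ (α*k+1) / Real.Gamma (α*k+2) := by
    intro k
    have hcongr : ∫ s in Ioc (0:ℝ) τ, F k s = ∫ s in Ioc (0:ℝ) τ,
        ((-lam) ^ (k+1) / Real.Gamma (α * (k+1) + 1)) * (s ^ (α * (k+1)) * (τ - s) ^ (-α)) := by
      refine setIntegral_congr_fun measurableSet_Ioc fun s hs => ?_
      simp only [hF]
      have h1 : (-(lam * s ^ α)) ^ (k+1) = (-lam) ^ (k+1) * (s ^ α) ^ (k+1) := by
        rw [← mul_pow]; ring_nf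
      have h2 : (s ^ α) ^ (k+1) = s ^ (α * (k+1)) := by
        rw [← Real.rpow_natCast (s ^ α) (k+1), ← Real.rpow_mul hs.1.le]
        push_cast; ring_nf
      rw [h1, h2]; ring
    rw [hcongr, MeasureTheory.integral_const_mul, ← intervalIntegral.integral_of_le hτ.le]
    have hβ := real_beta (u := α * (k+1) + 1) (v := 1 - α) (by positivity) (by linarith) hτ
    have hsimp : ∀ s : ℝ, s ^ (α * (k+1) + 1 - 1) * (τ - s) ^ (1 - α - 1)
        = s ^ (α * (k+1)) * (τ - s) ^ (-α) := by
      intro s; norm_num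
    rw [show (fun s => s ^ (α * (k+1)) * (τ - s) ^ (-α))
        = fun s => s ^ (α * (k+1) + 1 - 1) * (τ - s) ^ (1 - α - 1) by
      funext s; rw [hsimp]] at *
    rw [hβ]
    have he1 : α * (k+1) + 1 + (1 - α) - 1 = α * k + 1 := by ring
    have he2 : α * (k+1) + 1 + (1 - α) = α * k + 2 := by ring
    rw [he1, he2]
    have hΓk := hΓ (α * (k+1) + 1) (by positivity)
    field_simp
  calc ∫ s in (0:ℝ)..τ, (τ - s) ^ (-α) * (mittagLeffler α 1 (-(lam * s ^ α)) - 1)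
      = ∫ s in Ioc (0:ℝ) τ, ∑' k : ℕ, F k s := by
        rw [intervalIntegral.integral_of_le hτ.le]
        exact setIntegral_congr_fun measurableSet_Ioc fun s _ => hptw s
  _ = ∑' k : ℕ, ∫ s in Ioc (0:ℝ) τ, F k s := hswap.symm
  _ = _ := tsum_congr hval

lemma rhs_eq (α lam : ℝ) (hα : 0 < α) (hα1 : α < 1) (hlam : 0 ≤ lam) {τ : ℝ} (hτ : 0 < τ) :
    ∫ r in (0:ℝ)..τ, -(lam * mittagLeffler α 1 (-(lam * r ^ α)))
      = ∑' k : ℕ, (-lam) ^ (k+1) * τ ^ (α*k+1) / Real.Gamma (α*k+2) := by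
  have hΓ : ∀ c : ℝ, 0 < c → 0 < Real.Gamma c := fun c hc => Real.Gamma_pos_of_pos hc
  have hx : (0:ℝ) ≤ lam * τ ^ α := by positivity
  set G : ℕ → ℝ → ℝ := fun k r =>
    -(lam * ((-(lam * r ^ α)) ^ k / Real.Gamma (α * k + 1))) with hG
  have hptw : ∀ r : ℝ, -(lam * mittagLeffler α 1 (-(lam * r ^ α))) = ∑' k : ℕ, G k r := by
    intro r
    rw [mittagLeffler, ← tsum_mul_left, ← tsum_neg]
  have hcont : ∀ k : ℕ, Continuous (G k) := fun k =>
    (continuous_const.mul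
      (((continuous_const.mul (Real.continuous_rpow_const hα.le)).neg.pow k).div_const _)).neg
  have hbound : ∀ k : ℕ, ∀ r ∈ Ioc (0:ℝ) τ,
      ‖G k r‖ ≤ lam * (lam * τ ^ α) ^ k / Real.Gamma (α * k + 1) := by
    intro k r hr
    have h2 : r ^ α ≤ τ ^ α := Real.rpow_le_rpow hr.1.le hr.2 hα.le
    have h3 : (0:ℝ) ≤ r ^ α := Real.rpow_nonneg hr.1.le α
    have hΓk := hΓ (α * k + 1) (by positivity)
    simp only [hG, norm_neg, norm_mul, norm_div, Real.norm_eq_abs]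
    rw [abs_of_nonneg hlam, abs_of_pos hΓk, abs_pow, abs_neg,
      abs_of_nonneg (by positivity : (0:ℝ) ≤ lam * r ^ α), mul_div_assoc]
    gcongr
  have hGint : ∀ k : ℕ, IntegrableOn (G k) (Ioc 0 τ) volume := fun k =>
    (hcont k).integrableOn_Ioc
  have hsumint : Summable (fun k : ℕ => ∫ r in Ioc (0:ℝ) τ, ‖G k r‖) := by
    have hb : Summable (fun k : ℕ => lam * (lam * τ ^ α) ^ k / Real.Gamma (α * k + 1) * τ) :=
      (((summable_ml hα one_pos hx).mul_left lam).congr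
        (fun k => by rw [mul_div_assoc])).mul_right τ
    refine Summable.of_nonneg_of_le
      (fun k => integral_nonneg fun r => norm_nonneg _) (fun k => ?_) hb
    calc (∫ r in Ioc (0:ℝ) τ, ‖G k r‖)
        ≤ ∫ _ in Ioc (0:ℝ) τ, lam * (lam * τ ^ α) ^ k / Real.Gamma (α * k + 1) := by
          refine setIntegral_mono_on ((hGint k).norm)
            (integrableOn_const measure_Ioc_lt_top.ne) measurableSet_Ioc ?_
          intro r hr; exact hbound k r hr
    _ = lam * (lam * τ ^ α) ^ k / Real.Gamma (α * k + 1) * τ := by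
          rw [setIntegral_const, Real.volume_real_Ioc, smul_eq_mul, mul_comm]
          norm_num [max_eq_left hτ.le]
  have hswap := MeasureTheory.integral_tsum_of_summable_integral_norm
    (F := G) (μ := volume.restrict (Ioc (0:ℝ) τ)) hGint hsumint
  have hval : ∀ k : ℕ, (∫ r in Ioc (0:ℝ) τ, G k r)
      = (-lam) ^ (k+1) * τ ^ (α*k+1) / Real.Gamma (α*k+2) := by
    intro k
    have hak : (0:ℝ) < α * k + 1 := by positivity
    have hcongr : ∫ r in Ioc (0:ℝ) τ, G k r = ∫ r in Ioc (0:ℝ) τ,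
        ((-lam) ^ (k+1) / Real.Gamma (α * k + 1)) * r ^ (α * k) := by
      refine setIntegral_congr_fun measurableSet_Ioc fun r hr => ?_
      simp only [hG]
      have h1 : (-(lam * r ^ α)) ^ k = (-lam) ^ k * (r ^ α) ^ k := by
        rw [← mul_pow]; ring_nf
      have h2 : (r ^ α) ^ k = r ^ (α * k) := by
        rw [← Real.rpow_natCast (r ^ α) k, ← Real.rpow_mul hr.1.le]
      rw [h1, h2]; ring
    rw [hcongr, MeasureTheory.integral_const_mul, ← intervalIntegral.integral_of_le hτ.le]
    rw [integral_rpow (Or.inl (by linarith : (-1:ℝ) < α * k))]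
    rw [Real.zero_rpow (by linarith : α * k + 1 ≠ 0)]
    have hΓ2 : Real.Gamma (α * k + 2) = (α * k + 1) * Real.Gamma (α * k + 1) := by
      rw [show α * k + 2 = (α * k + 1) + 1 by ring, Real.Gamma_add_one (by linarith)]
    rw [hΓ2, sub_zero, div_mul_div_comm, mul_comm (Real.Gamma (α * (k:ℝ) + 1)) (α * (k:ℝ) + 1)]
  calc ∫ r in (0:ℝ)..τ, -(lam * mittagLeffler α 1 (-(lam * r ^ α)))
      = ∫ r in Ioc (0:ℝ) τ, ∑' k : ℕ, G k r := by
        rw [intervalIntegral.integral_of_le hτ.le]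
        exact setIntegral_congr_fun measurableSet_Ioc fun r _ => hptw r
  _ = ∑' k : ℕ, ∫ r in Ioc (0:ℝ) τ, G k r := hswap.symm
  _ = _ := tsum_congr hval

/-- `w(t) = E_{α,1}(-λ t^α)` satisfies `∂_t^α (w - w(0)) + λ w = 0`, where `∂_t^α`
is the Riemann–Liouville fractional derivative. -/
theorem mittagLeffler_solves_fractional_ode
    (α lam : ℝ) (hα : 0 < α) (hα1 : α < 1) (hlam : 0 ≤ lam) (t : ℝ) (ht : 0 < t) :
    HasDerivAt
      (fun τ : ℝ => (1 / Real.Gamma (1 - α)) *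
        ∫ s in (0:ℝ)..τ, (τ - s) ^ (-α) * (mittagLeffler α 1 (-(lam * s ^ α)) - 1))
      (-(lam * mittagLeffler α 1 (-(lam * t ^ α)))) t := by
  have hΓ : (0:ℝ) < Real.Gamma (1 - α) := Real.Gamma_pos_of_pos (by linarith)
  set h : ℝ → ℝ := fun r => -(lam * mittagLeffler α 1 (-(lam * r ^ α))) with hh
  have hcont : Continuous h := by
    have hml := continuous_ml hα one_pos
    exact (continuous_const.mul (hml.comp
      ((continuous_const.mul (Real.continuous_rpow_const hα.le)).neg))).neg
  have hftc : HasDerivAt (fun τ => ∫ r in (0:ℝ)..τ, h r) (h t) t :=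
    intervalIntegral.integral_hasDerivAt_right (hcont.intervalIntegrable 0 t)
      hcont.aestronglyMeasurable.stronglyMeasurableAtFilter hcont.continuousAt
  have heq : (fun τ : ℝ => (1 / Real.Gamma (1 - α)) *
      ∫ s in (0:ℝ)..τ, (τ - s) ^ (-α) * (mittagLeffler α 1 (-(lam * s ^ α)) - 1))
      =ᶠ[nhds t] (fun τ => ∫ r in (0:ℝ)..τ, h r) := by
    filter_upwards [isOpen_Ioi.mem_nhds (mem_Ioi.mpr ht)] with τ hτ
    rw [lhs_eq α lam hα hα1 hlam hτ]
    simp only [hh]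
    rw [rhs_eq α lam hα hα1 hlam hτ, ← tsum_mul_left]
    refine tsum_congr fun k => ?_
    field_simp
  exact hftc.congr_of_eventuallyEq heq
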